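/- With the notation of the conformal Lagrangian set-up for the structure G: let x : ℝ → ℝ^{4n} be a C² curve, and suppose that for every t ∈ ℝ and every w ∈ ℝ^{4n}, Φ_L^G(x(t))(ẋ(t), w) = D₁E_L^G(x(t), ẋ(t))·w, where D₁ denotes the Fréchet derivative of E_L^G in its first (position) argument with the velocity argument held fixed. Then the conformal Euler–Lagrange equations (3.5) hold along x: for every i ∈ {1,…,n} and every t ∈ ℝ, b·(d/dt)(e^{−λ(x(t))}·(∂L/∂x_i)(x(t))) + (∂L/∂x_{2n+i})(x(t)) = 0, b·(d/dt)(e^{−λ(x(t))}·(∂L/∂x_{n+i})(x(t))) − (∂L/∂x_{3n+i})(x(t)) = 0, b·(d/dt)(e^{λ(x(t))}·(∂L/∂x_{2n+i})(x(t))) + (∂L/∂x_i)(x(t)) = 0, and b·(d/dt)(e^{λ(x(t))}·(∂L/∂x_{3n+i})(x(t))) − (∂L/∂x_{n+i})(x(t)) = 0. -/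

import Mathlib

open Real

noncomputable section

/-- The partial derivative `∂f/∂x_k` of `f : ℝ^{4n} → ℝ` at `x`, in the
coordinate direction `k`. -/
def pd {n : ℕ} (f : ((Fin 4 × Fin n) → ℝ) → ℝ) (k : Fin 4 × Fin n)
    (x : (Fin 4 × Fin n) → ℝ) : ℝ :=
  fderiv ℝ f x (Pi.single k 1)

/-- The conformal 1-form `d_G L` of the structure `G`, viewed as a map
assigning to each point `x` the linear functional `w ↦ (d_G L)(x)(w)`. -/
def omegaG {n : ℕ} (b : ℝ) (L lam : ((Fin 4 × Fin n) → ℝ) → ℝ)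
    (x w : (Fin 4 × Fin n) → ℝ) : ℝ :=
  ∑ i : Fin n,
    (-(b * exp (lam x) * pd L (2, i) x * w (0, i))
     + b * exp (lam x) * pd L (3, i) x * w (1, i)
     - b * exp (-lam x) * pd L (0, i) x * w (2, i)
     + b * exp (-lam x) * pd L (1, i) x * w (3, i))

/-- The closed 2-form `Φ_L^G = -d(d_G L)`:
`Φ_L^G(x)(u, v) = (Dω_G(x)·v)(u) - (Dω_G(x)·u)(v)`. -/
def PhiG {n : ℕ} (b : ℝ) (L lam : ((Fin 4 × Fin n) → ℝ) → ℝ)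
    (x u v : (Fin 4 × Fin n) → ℝ) : ℝ :=
  fderiv ℝ (fun y => omegaG b L lam y u) x v
    - fderiv ℝ (fun y => omegaG b L lam y v) x u

/-- The conformal energy function `E_L^G` at a point `x` with velocity `X`. -/
def EG {n : ℕ} (b : ℝ) (L lam : ((Fin 4 × Fin n) → ℝ) → ℝ)
    (x X : (Fin 4 × Fin n) → ℝ) : ℝ :=
  (∑ i : Fin n,
    (-(b * X (0, i) * exp (lam x) * pd L (2, i) x)
     + b * X (1, i) * exp (lam x) * pd L (3, i) x
     - b * X (2, i) * exp (-lam x) * pd L (0, i) x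
     + b * X (3, i) * exp (-lam x) * pd L (1, i) x)) - L x

lemma pd_diff {n : ℕ} {L : ((Fin 4 × Fin n) → ℝ) → ℝ} (hL : ContDiff ℝ 2 L)
    (k : Fin 4 × Fin n) : Differentiable ℝ (pd L k) := by
  have h : ContDiff ℝ 1 (fderiv ℝ L) := hL.fderiv_right (by norm_num)
  exact (ContinuousLinearMap.apply ℝ ℝ (Pi.single k 1)).differentiable.comp
    (h.differentiable one_ne_zero)

lemma omega_single {n : ℕ} (b : ℝ) (L lam : ((Fin 4 × Fin n) → ℝ) → ℝ)
    (i : Fin n) (y : (Fin 4 × Fin n) → ℝ) :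
    omegaG b L lam y (Pi.single ((0 : Fin 4), i) 1)
        = -(b * exp (lam y) * pd L (2, i) y)
    ∧ omegaG b L lam y (Pi.single ((1 : Fin 4), i) 1)
        = b * exp (lam y) * pd L (3, i) y
    ∧ omegaG b L lam y (Pi.single ((2 : Fin 4), i) 1)
        = -(b * exp (-lam y) * pd L (0, i) y)
    ∧ omegaG b L lam y (Pi.single ((3 : Fin 4), i) 1)
        = b * exp (-lam y) * pd L (1, i) y := by
  refine ⟨?_, ?_, ?_, ?_⟩ <;>
  · unfold omegaG
    rw [Finset.sum_eq_single i]
    · simp [Pi.single_apply, Prod.ext_iff]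
      try ring
    · intro j _ hj
      simp [Pi.single_apply, Prod.ext_iff, hj]
    · simp

lemma omega_diff {n : ℕ} {b : ℝ} {L lam : ((Fin 4 × Fin n) → ℝ) → ℝ}
    (hL : ContDiff ℝ 2 L) (hlam : ContDiff ℝ 2 lam)
    (w : (Fin 4 × Fin n) → ℝ) :
    Differentiable ℝ (fun y => omegaG b L lam y w) := by
  have h0 : ∀ k, Differentiable ℝ (pd L k) := pd_diff hL
  have h1 : Differentiable ℝ lam := hlam.differentiable two_ne_zero
  unfold omegaG
  apply Differentiable.fun_sum
  intro i _
  apply Differentiable.add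
  apply Differentiable.sub
  apply Differentiable.add
  · exact (((differentiable_const b).mul (h1.exp)).mul (h0 _)).mul
      (differentiable_const _) |>.neg
  · exact (((differentiable_const b).mul (h1.exp)).mul (h0 _)).mul
      (differentiable_const _)
  · exact (((differentiable_const b).mul (h1.neg.exp)).mul (h0 _)).mul
      (differentiable_const _)
  · exact (((differentiable_const b).mul (h1.neg.exp)).mul (h0 _)).mul
      (differentiable_const _)

lemma EG_eq {n : ℕ} (b : ℝ) (L lam : ((Fin 4 × Fin n) → ℝ) → ℝ)
    (y X : (Fin 4 × Fin n) → ℝ) :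
    EG b L lam y X = omegaG b L lam y X - L y := by
  unfold EG omegaG
  congr 1
  exact Finset.sum_congr rfl fun i _ => by ring

/-- Along an integral curve of the dynamical equation `i_X Φ_L^G = dE_L^G`
(equation (1.1)), the conformal Euler–Lagrange equations (3.5) hold. -/
theorem stmt9 (n : ℕ) (b : ℝ) (L lam : ((Fin 4 × Fin n) → ℝ) → ℝ)
    (hL : ContDiff ℝ 2 L) (hlam : ContDiff ℝ 2 lam)
    (x : ℝ → (Fin 4 × Fin n) → ℝ) (hx : ContDiff ℝ 2 x)
    (hdyn : ∀ (t : ℝ) (w : (Fin 4 × Fin n) → ℝ),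
      PhiG b L lam (x t) (deriv x t) w
        = fderiv ℝ (fun y => EG b L lam y (deriv x t)) (x t) w) :
    ∀ (i : Fin n) (t : ℝ),
      b * deriv (fun s => exp (-lam (x s)) * pd L (0, i) (x s)) t
          + pd L (2, i) (x t) = 0 ∧
      b * deriv (fun s => exp (-lam (x s)) * pd L (1, i) (x s)) t
          - pd L (3, i) (x t) = 0 ∧
      b * deriv (fun s => exp (lam (x s)) * pd L (2, i) (x s)) t
          + pd L (0, i) (x t) = 0 ∧
      b * deriv (fun s => exp (lam (x s)) * pd L (3, i) (x s)) t
          - pd L (1, i) (x t) = 0 := by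
  intro i t
  set p := x t with hp
  set X := deriv x t with hX
  have hLd : Differentiable ℝ L := hL.differentiable two_ne_zero
  have hlamd : Differentiable ℝ lam := hlam.differentiable two_ne_zero
  have hpd : ∀ k, Differentiable ℝ (pd L k) := pd_diff hL
  -- the key consequence of the dynamical equation:
  have key : ∀ w, fderiv ℝ (fun y => omegaG b L lam y w) p X = fderiv ℝ L p w := by
    intro w
    have h1 := hdyn t w
    rw [show (fun y => EG b L lam y X) = fun y => omegaG b L lam y X - L y from
        funext fun y => EG_eq b L lam y X] at h1
    rw [fderiv_fun_sub (omega_diff hL hlam X p)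
        (hLd p)] at h1
    unfold PhiG at h1
    simp only [ContinuousLinearMap.sub_apply] at h1
    linarith
  -- chain rule along the curve
  have hchain : ∀ f : ((Fin 4 × Fin n) → ℝ) → ℝ, Differentiable ℝ f →
      deriv (fun s => f (x s)) t = fderiv ℝ f p X := by
    intro f hf
    have hx' : HasDerivAt x X t := (hx.differentiable two_ne_zero t).hasDerivAt
    exact ((hf p).hasFDerivAt.comp_hasDerivAt t hx').deriv
  have hfm : Differentiable ℝ (fun y => exp (-lam y) * pd L (0, i) y) :=
    hlamd.neg.exp.mul (hpd _)
  have hfm1 : Differentiable ℝ (fun y => exp (-lam y) * pd L (1, i) y) :=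
    hlamd.neg.exp.mul (hpd _)
  have hfp2 : Differentiable ℝ (fun y => exp (lam y) * pd L (2, i) y) :=
    hlamd.exp.mul (hpd _)
  have hfp3 : Differentiable ℝ (fun y => exp (lam y) * pd L (3, i) y) :=
    hlamd.exp.mul (hpd _)
  -- fderiv of `-(b * f)` and `b * f`
  have hneg : ∀ f : ((Fin 4 × Fin n) → ℝ) → ℝ, Differentiable ℝ f →
      fderiv ℝ (fun y => -(b * f y)) p X = -(b * fderiv ℝ f p X) := by
    intro f hf
    rw [((((hf p).hasFDerivAt).const_mul b).fun_neg).fderiv]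
    simp
  have hpos : ∀ f : ((Fin 4 × Fin n) → ℝ) → ℝ, Differentiable ℝ f →
      fderiv ℝ (fun y => b * f y) p X = b * fderiv ℝ f p X := by
    intro f hf
    rw [(((hf p).hasFDerivAt).const_mul b).fderiv]
    simp
  refine ⟨?_, ?_, ?_, ?_⟩
  · have h := key (Pi.single ((2 : Fin 4), i) 1)
    rw [show (fun y => omegaG b L lam y (Pi.single ((2 : Fin 4), i) 1))
        = fun y => -(b * (exp (-lam y) * pd L (0, i) y)) from
        funext fun y => by rw [(omega_single b L lam i y).2.2.1]; ring] at h
    rw [hneg _ hfm] at h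
    rw [hchain _ hfm]
    have : fderiv ℝ L p (Pi.single ((2 : Fin 4), i) 1) = pd L (2, i) p := rfl
    rw [this] at h
    linarith
  · have h := key (Pi.single ((3 : Fin 4), i) 1)
    rw [show (fun y => omegaG b L lam y (Pi.single ((3 : Fin 4), i) 1))
        = fun y => b * (exp (-lam y) * pd L (1, i) y) from
        funext fun y => by rw [(omega_single b L lam i y).2.2.2]; ring] at h
    rw [hpos _ hfm1] at h
    rw [hchain _ hfm1]
    have : fderiv ℝ L p (Pi.single ((3 : Fin 4), i) 1) = pd L (3, i) p := rfl
    rw [this] at h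
    linarith
  · have h := key (Pi.single ((0 : Fin 4), i) 1)
    rw [show (fun y => omegaG b L lam y (Pi.single ((0 : Fin 4), i) 1))
        = fun y => -(b * (exp (lam y) * pd L (2, i) y)) from
        funext fun y => by rw [(omega_single b L lam i y).1]; ring] at h
    rw [hneg _ hfp2] at h
    rw [hchain _ hfp2]
    have : fderiv ℝ L p (Pi.single ((0 : Fin 4), i) 1) = pd L (0, i) p := rfl
    rw [this] at h
    linarith
  · have h := key (Pi.single ((1 : Fin 4), i) 1)
    rw [show (fun y => omegaG b L lam y (Pi.single ((1 : Fin 4), i) 1))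
        = fun y => b * (exp (lam y) * pd L (3, i) y) from
        funext fun y => by rw [(omega_single b L lam i y).2.1]; ring] at h
    rw [hpos _ hfp3] at h
    rw [hchain _ hfp3]
    have : fderiv ℝ L p (Pi.single ((1 : Fin 4), i) 1) = pd L (1, i) p := rfl
    rw [this] at h
    linarith
  end
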